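/- Let g ≥ 2, let X be a finite subset of ℕ with |X| = m ≥ 2, let B = V × V^c ∈ 𝓑[X] be a block, and let z ∈ V^c. Let p ∈ ℚ[Y(X)] be a homogeneous polynomial of degree at least 2gm(m−1) − m + 1 − (m−1)(m−2)g. Then [p] has a representative in the subring ℚ[Y⁻_B(X) ∪ {y^{−ε_V(i)}_{iz} : i ∈ X ∖ {z}}] which is a sum of monomials, each of which, when factorised as q · r with q a monomial in the variables Y⁻_B(X) and r a monomial in the variables {y^{−ε_V(i)}_{iz} : i ∈ X ∖ {z}}, satisfies: either deg q ≥ m(m−1)g − m + 2, or r is divisible by ∏_{i ∈ X ∖ {z}} (y^{−ε_V(i)}_{iz})^{2g}. -/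

import Mathlib

open MvPolynomial

/-- Elements of the finite set `X ⊆ ℕ`. -/
abbrev El (X : Finset ℕ) : Type := {x : ℕ // x ∈ X}

/-- The set of variables `Y(X)`: `y⁺_{ij}` (sign `true`) for `i, j ∈ X`, and
`y⁻_{ij}` (sign `false`) for `i ≠ j ∈ X`. -/
abbrev YIdx (X : Finset ℕ) : Type :=
  {v : Bool × El X × El X // v.1 = false → v.2.1 ≠ v.2.2}

/-- The variable `y^s_{ij}` (with the convention that `y⁻_{ii} = 0`). -/
noncomputable def yv {X : Finset ℕ} (s : Bool) (i j : El X) :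
    MvPolynomial (YIdx X) ℚ :=
  if h : s = false → i ≠ j then MvPolynomial.X ⟨(s, i, j), h⟩ else 0

/-- The ideal `I(X)` of relations. -/
noncomputable def relIdeal (X : Finset ℕ) : Ideal (MvPolynomial (YIdx X) ℚ) :=
  Ideal.span
    ({p | ∃ i j : El X, p = yv false i j + yv false j i} ∪
     {p | ∃ i j : El X, p = yv true i j - yv true j i} ∪
     {p | ∃ i j k : El X, p = yv false i j + yv false j k + yv false k i} ∪
     {p | ∃ i j k : El X, p = yv true i j - yv true j k + yv false k i})

/-- The quotient map to `R(X) = ℚ[Y(X)]/I(X)`. -/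
noncomputable def rmk (X : Finset ℕ) :
    MvPolynomial (YIdx X) ℚ →+* MvPolynomial (YIdx X) ℚ ⧸ relIdeal X :=
  Ideal.Quotient.mk (relIdeal X)

/-- `p` is a monomial (a single term). -/
def IsMonomial {X : Finset ℕ} (p : MvPolynomial (YIdx X) ℚ) : Prop :=
  ∃ (d : YIdx X →₀ ℕ) (c : ℚ), p = MvPolynomial.monomial d c

/-- The sign `ε_B(i,j)` (as a `Bool`, `true` = `+1`) of the block `B = V × Vᶜ`:
`+1` iff `(i,j) ∈ B ∪ B̄`. -/
def epsb {X : Finset ℕ} (V : Finset (El X)) (i j : El X) : Bool :=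
  xor (decide (i ∈ V)) (decide (j ∈ V))

/-- The variable set `Y⁻_B(X) = {y^{ε_B(i,j)}_{ij} : i ≠ j}` for `B = V × Vᶜ`.
(For `V = ∅` this is `Y⁻(X)`.) -/
def YmB {X : Finset ℕ} (V : Finset (El X)) : Set (YIdx X) :=
  {v | v.1.2.1 ≠ v.1.2.2 ∧ v.1.1 = epsb V v.1.2.1 v.1.2.2}

/-- The variables `y^{-eps_V(i)}_{iz}` for `i ∈ X \ {z}`: second index `z`, sign
minus iff `i ∈ V`. -/
def zCol {X : Finset ℕ} (V : Finset (El X)) (z : El X) : Set (YIdx X) :=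
  {v | v.1.2.2 = z ∧ v.1.2.1 ≠ z ∧ v.1.1 = !(decide (v.1.2.1 ∈ V))}

/-! ### Auxiliary material -/

section Core

variable {T : Type*} [CommRing T] [Algebra ℚ T] {ι : Type*} [Fintype ι] [DecidableEq ι]

omit [Algebra ℚ T] in
lemma prod_pow_extract (f : ι → T) (β : ι → ℕ) (j : ι) (h : 1 ≤ β j) :
    ∏ i, f i ^ β i = f j * ∏ i, f i ^ (Function.update β j (β j - 1)) i := by
  rw [← Finset.mul_prod_erase Finset.univ (fun i => f i ^ β i) (Finset.mem_univ j),
      ← Finset.mul_prod_erase Finset.univ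
        (fun i => f i ^ (Function.update β j (β j - 1)) i) (Finset.mem_univ j),
      ← mul_assoc]
  congr 1
  · rw [Function.update_self, ← pow_succ']
    congr 1
    omega
  · exact Finset.prod_congr rfl fun k hk => by
      rw [Function.update_of_ne (Finset.ne_of_mem_erase hk)]

omit [Algebra ℚ T] in
lemma prod_pow_bump (f : ι → T) (α : ι → ℕ) (j : ι) :
    ∏ k, f k ^ (Function.update α j (α j + 1)) k = f j * ∏ k, f k ^ α k := by
  rw [prod_pow_extract f (Function.update α j (α j + 1)) j
    (show 1 ≤ Function.update α j (α j + 1) j by rw [Function.update_self]; omega)]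
  have h3 : Function.update (Function.update α j (α j + 1)) j
      ((Function.update α j (α j + 1)) j - 1) = α := by
    funext k
    rcases eq_or_ne k j with rfl | h
    · simp
    · simp [Function.update_of_ne h]
  rw [h3]

omit [Algebra ℚ T] in
lemma prod_pow_single (f : ι → T) (j : ι) :
    ∏ k, f k ^ (fun k => if k = j then 1 else 0 : ι → ℕ) k = f j := by
  have h : ∀ k, f k ^ (if k = j then 1 else 0) = if k = j then f k else 1 := by
    intro k; split <;> simp
  rw [Finset.prod_congr rfl fun k _ => h k, Finset.prod_ite_eq' Finset.univ j f,
    if_pos (Finset.mem_univ j)]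

lemma sum_split (f : ι → ℕ) (j : ι) :
    ∑ i, f i = f j + ∑ i ∈ Finset.univ.erase j, f i :=
  (Finset.add_sum_erase Finset.univ f (Finset.mem_univ j)).symm

lemma sum_update_split (f : ι → ℕ) (j : ι) (v : ℕ) :
    ∑ i, Function.update f j v i = v + ∑ i ∈ Finset.univ.erase j, f i := by
  rw [sum_split (Function.update f j v) j, Function.update_self]
  congr 1
  exact Finset.sum_congr rfl fun k hk => by
    rw [Function.update_of_ne (Finset.ne_of_mem_erase hk)]

lemma core (b c : ι → T) (w : T) (e : ι → ℚ) (he : ∀ i, e i * e i = 1)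
    (hc : ∀ i, c i = b i + e i • w) (g Dq dp : ℕ)
    (hdp : Dq + 2 * g * Fintype.card ι ≤ dp + 1) :
    ∀ (n : ℕ) (α β : ι → ℕ), (∑ i, α i) + (∑ i, β i) = dp →
      ((∑ i, (2 * g - β i)) + (Dq - ∑ i, α i) ≤ n) →
      (∏ i, b i ^ α i) * (∏ i, c i ^ β i) ∈ Submodule.span ℚ
        {x : T | ∃ α' β' : ι → ℕ, (Dq ≤ ∑ i, α' i ∨ ∀ i, 2 * g ≤ β' i) ∧
          x = (∏ i, b i ^ α' i) * (∏ i, c i ^ β' i)} := by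
  intro n
  induction n with
  | zero =>
    intro α β hdeg hmeas
    by_cases hA : Dq ≤ ∑ i, α i
    · exact Submodule.subset_span ⟨α, β, Or.inl hA, rfl⟩
    by_cases hB : ∀ i, 2 * g ≤ β i
    · exact Submodule.subset_span ⟨α, β, Or.inr hB, rfl⟩
    push_neg at hB
    obtain ⟨i, hi⟩ := hB
    exfalso
    have h1 : 2 * g - β i ≤ ∑ k, (2 * g - β k) :=
      Finset.single_le_sum (f := fun k => 2 * g - β k) (fun k _ => Nat.zero_le _)
        (Finset.mem_univ i)
    omega
  | succ n ih =>
    intro α β hdeg hmeas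
    by_cases hA : Dq ≤ ∑ i, α i
    · exact Submodule.subset_span ⟨α, β, Or.inl hA, rfl⟩
    by_cases hB : ∀ i, 2 * g ≤ β i
    · exact Submodule.subset_span ⟨α, β, Or.inr hB, rfl⟩
    push_neg at hB hA
    obtain ⟨i, hi⟩ := hB
    have hj : ∃ j, 2 * g < β j := by
      by_contra h
      push_neg at h
      have hlt : ∑ k, β k < ∑ _k : ι, 2 * g :=
        Finset.sum_lt_sum (fun k _ => h k) ⟨i, Finset.mem_univ i, hi⟩
      simp only [Finset.sum_const, smul_eq_mul, Finset.card_univ] at hlt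
      have hmc : Fintype.card ι * (2 * g) = 2 * g * Fintype.card ι := Nat.mul_comm _ _
      omega
    obtain ⟨j, hj⟩ := hj
    have hij : i ≠ j := by rintro rfl; omega
    set β₀ : ι → ℕ := Function.update β j (β j - 1) with hβ₀def
    have hβ₀i : β₀ i = β i := Function.update_of_ne hij _ _
    have hcj : c j = b j + (e i * e j) • (c i - b i) := by
      have h1 : c i - b i = e i • w := by rw [hc i]; ring
      have h2 : (e i * e j) * e i = e j := by linear_combination e j * he i
      rw [h1, smul_smul, h2, hc j]
    have hb1 : ∏ k, b k ^ (Function.update α j (α j + 1)) k = b j * ∏ k, b k ^ α k :=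
      prod_pow_bump b α j
    have hb2 : ∏ k, b k ^ (Function.update α i (α i + 1)) k = b i * ∏ k, b k ^ α k :=
      prod_pow_bump b α i
    have hc2 : ∏ k, c k ^ (Function.update β₀ i (β₀ i + 1)) k = c i * ∏ k, c k ^ β₀ k :=
      prod_pow_bump c β₀ i
    have expand : (∏ k, b k ^ α k) * (∏ k, c k ^ β k)
        = ((∏ k, b k ^ (Function.update α j (α j + 1)) k) * ∏ k, c k ^ β₀ k)
          + (e i * e j) • ((∏ k, b k ^ α k) * ∏ k, c k ^ (Function.update β₀ i (β₀ i + 1)) k)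
          - (e i * e j) • ((∏ k, b k ^ (Function.update α i (α i + 1)) k) * ∏ k, c k ^ β₀ k) := by
      rw [hb1, hb2, hc2, prod_pow_extract c β j (by omega), ← hβ₀def, hcj]
      simp only [Algebra.smul_def, map_mul]
      ring
    have hsaj : ∑ k, (Function.update α j (α j + 1)) k = (∑ k, α k) + 1 := by
      rw [sum_update_split α j (α j + 1), sum_split α j]; omega
    have hsai : ∑ k, (Function.update α i (α i + 1)) k = (∑ k, α k) + 1 := by
      rw [sum_update_split α i (α i + 1), sum_split α i]; omega
    have hsbj : ∑ k, β k = β j + ∑ k ∈ Finset.univ.erase j, β k := sum_split β j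
    have hsb0 : ∑ k, β₀ k = (∑ k, β k) - 1 := by
      rw [hβ₀def, sum_update_split β j (β j - 1)]; omega
    have hsb2 : ∑ k, (Function.update β₀ i (β₀ i + 1)) k = (∑ k, β₀ k) + 1 := by
      rw [sum_update_split β₀ i (β₀ i + 1), sum_split β₀ i]; omega
    have hm0 : ∑ k, (2 * g - β₀ k) = ∑ k, (2 * g - β k) := by
      refine Finset.sum_congr rfl fun k _ => ?_
      rcases eq_or_ne k j with rfl | h
      · rw [hβ₀def, Function.update_self]; omega
      · rw [hβ₀def, Function.update_of_ne h]
    have hm2 : (∑ k, (2 * g - (Function.update β₀ i (β₀ i + 1)) k)) + 1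
        = ∑ k, (2 * g - β₀ k) := by
      have e1 : ∑ k, (2 * g - (Function.update β₀ i (β₀ i + 1)) k)
          = (2 * g - (β₀ i + 1)) + ∑ k ∈ Finset.univ.erase i, (2 * g - β₀ k) := by
        rw [sum_split (fun k => 2 * g - (Function.update β₀ i (β₀ i + 1)) k) i,
          Function.update_self]
        congr 1
        refine Finset.sum_congr rfl fun k hk => ?_
        rw [Function.update_of_ne (Finset.ne_of_mem_erase hk)]
      have e2 : ∑ k, (2 * g - β₀ k)
          = (2 * g - β₀ i) + ∑ k ∈ Finset.univ.erase i, (2 * g - β₀ k) :=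
        sum_split (fun k => 2 * g - β₀ k) i
      rw [e1, e2]
      omega
    rw [expand]
    refine Submodule.sub_mem _ (Submodule.add_mem _ ?_ (Submodule.smul_mem _ _ ?_))
      (Submodule.smul_mem _ _ ?_)
    · exact ih (Function.update α j (α j + 1)) β₀ (by omega) (by omega)
    · exact ih α (Function.update β₀ i (β₀ i + 1)) (by omega) (by omega)
    · exact ih (Function.update α i (α i + 1)) β₀ (by omega) (by omega)

end Core

section Kappa

variable {X : Finset ℕ}

/-- The assignment realizing `y^s_{ij} ↦ (x_i ± x_j)/2`. -/
noncomputable def fassign (X : Finset ℕ) : YIdx X → MvPolynomial (El X) ℚ :=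
  fun v => (1/2 : ℚ) •
    (MvPolynomial.X v.1.2.1 + (if v.1.1 then (1 : ℚ) else -1) • MvPolynomial.X v.1.2.2)

noncomputable def phiA (X : Finset ℕ) :
    MvPolynomial (YIdx X) ℚ →ₐ[ℚ] MvPolynomial (El X) ℚ := aeval (fassign X)

noncomputable def psiA (X : Finset ℕ) :
    MvPolynomial (El X) ℚ →ₐ[ℚ] MvPolynomial (YIdx X) ℚ := aeval (fun i => yv true i i)

lemma yv_eq_X (s : Bool) (i j : El X) (h : s = false → i ≠ j) :
    yv s i j = MvPolynomial.X ⟨(s, i, j), h⟩ := by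
  rw [yv, dif_pos h]

lemma g1_mem (i j : El X) : yv false i j + yv false j i ∈ relIdeal X :=
  Ideal.subset_span (Set.mem_union_left _ (Set.mem_union_left _ (Set.mem_union_left _
    ⟨i, j, rfl⟩)))

lemma g2_mem (i j : El X) : yv true i j - yv true j i ∈ relIdeal X :=
  Ideal.subset_span (Set.mem_union_left _ (Set.mem_union_left _ (Set.mem_union_right _
    ⟨i, j, rfl⟩)))

lemma g4_mem (i j k : El X) : yv true i j - yv true j k + yv false k i ∈ relIdeal X :=
  Ideal.subset_span (Set.mem_union_right _ ⟨i, j, k, rfl⟩)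

lemma kappaX (v : YIdx X) :
    psiA X (phiA X (MvPolynomial.X v)) - MvPolynomial.X v ∈ relIdeal X := by
  obtain ⟨⟨s, i, j⟩, hv⟩ := v
  have hxv : (MvPolynomial.X ⟨(s, i, j), hv⟩ : MvPolynomial (YIdx X) ℚ) = yv s i j :=
    (yv_eq_X s i j hv).symm
  have hcomp : psiA X (phiA X (MvPolynomial.X (⟨(s, i, j), hv⟩ : YIdx X)))
      = (1/2 : ℚ) • (yv true i i + (if s then (1 : ℚ) else -1) • yv true j j) := by
    have hf : fassign X (⟨(s, i, j), hv⟩ : YIdx X) = (1/2 : ℚ) •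
        (MvPolynomial.X i + (if s then (1 : ℚ) else -1) • MvPolynomial.X j) := rfl
    rw [phiA, aeval_X, hf, map_smul, map_add, map_smul, psiA, aeval_X, aeval_X]
  rw [hcomp, hxv]
  cases s with
  | true =>
    have key : (1/2 : ℚ) • (yv true i i + (if true then (1:ℚ) else -1) • yv true j j)
        - yv true i j
        = (1/2 : ℚ) • ((yv false i j + yv false j i)
            - (yv true i j - yv true j j + yv false j i)
            - (yv true j i - yv true i i + yv false i j)
            - (yv true i j - yv true j i)) := by
      simp only [if_pos]
      module
    rw [key, MvPolynomial.smul_eq_C_mul]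
    refine Ideal.mul_mem_left _ _ ?_
    exact Ideal.sub_mem _ (Ideal.sub_mem _ (Ideal.sub_mem _ (g1_mem i j) (g4_mem i j j))
      (g4_mem j i i)) (g2_mem i j)
  | false =>
    have key : (1/2 : ℚ) • (yv true i i + (if false then (1:ℚ) else -1) • yv true j j)
        - yv false i j
        = (1/2 : ℚ) • ((yv true i j - yv true j j + yv false j i)
            - (yv true j i - yv true i i + yv false i j)
            - (yv false j i + yv false i j)
            + (yv true j i - yv true i j)) := by
      simp only [Bool.false_eq_true, if_false]
      module
    rw [key, MvPolynomial.smul_eq_C_mul]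
    refine Ideal.mul_mem_left _ _ ?_
    exact Ideal.add_mem _ (Ideal.sub_mem _ (Ideal.sub_mem _ (g4_mem i j j) (g4_mem j i i))
      (g1_mem j i)) (g2_mem j i)

lemma kappa_sub_mem (p : MvPolynomial (YIdx X) ℚ) :
    psiA X (phiA X p) - p ∈ relIdeal X := by
  induction p using MvPolynomial.induction_on with
  | C a => simp [phiA, psiA, aeval_C]
  | add p q hp hq =>
    have h : psiA X (phiA X (p + q)) - (p + q)
        = (psiA X (phiA X p) - p) + (psiA X (phiA X q) - q) := by
      simp only [map_add]; ring
    rw [h]; exact Ideal.add_mem _ hp hq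
  | mul_X p v hp =>
    have h : psiA X (phiA X (p * MvPolynomial.X v)) - p * MvPolynomial.X v
        = psiA X (phiA X p) * (psiA X (phiA X (MvPolynomial.X v)) - MvPolynomial.X v)
          + MvPolynomial.X v * (psiA X (phiA X p) - p) := by
      simp only [map_mul]; ring
    rw [h]
    exact Ideal.add_mem _ (Ideal.mul_mem_left _ _ (kappaX v)) (Ideal.mul_mem_left _ _ hp)

end Kappa


section Span

variable {X : Finset ℕ}

/-- Indices other than `z`. -/
abbrev Io (X : Finset ℕ) (z : El X) : Type := {i : El X // i ≠ z}

/-- The sign `ε_V(i)` as a rational. -/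
noncomputable def sgq (V : Finset (El X)) (z : El X) : Io X z → ℚ :=
  fun i => if i.1 ∈ V then 1 else -1

/-- Image of the block variable `y^{ε_B(i,z)}_{iz}`. -/
noncomputable def bbT (V : Finset (El X)) (z : El X) : Io X z → MvPolynomial (El X) ℚ :=
  fun i => (1/2 : ℚ) • (MvPolynomial.X i.1 + sgq V z i • MvPolynomial.X z)

/-- Image of the column variable `y^{-ε_V(i)}_{iz}`. -/
noncomputable def ccT (V : Finset (El X)) (z : El X) : Io X z → MvPolynomial (El X) ℚ :=
  fun i => (1/2 : ℚ) • (MvPolynomial.X i.1 - sgq V z i • MvPolynomial.X z)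

/-- The block variable `y^{ε_B(i,z)}_{iz}` itself. -/
noncomputable def BAq (V : Finset (El X)) (z : El X) : Io X z → MvPolynomial (YIdx X) ℚ :=
  fun i => yv (epsb V i.1 z) i.1 z

/-- The column variable `y^{-ε_V(i)}_{iz}` itself. -/
noncomputable def CAq (V : Finset (El X)) (z : El X) : Io X z → MvPolynomial (YIdx X) ℚ :=
  fun i => yv (!(decide (i.1 ∈ V))) i.1 z

lemma sgq_sq (V : Finset (El X)) (z : El X) (i : Io X z) : sgq V z i * sgq V z i = 1 := by
  rw [sgq]; split <;> norm_num

lemma ccT_rel (V : Finset (El X)) (z : El X) (i : Io X z) :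
    ccT V z i = bbT V z i + sgq V z i • (-((1 : ℚ) • MvPolynomial.X z)) := by
  rw [ccT, bbT]
  match_scalars <;> ring

/-- Index of the block variable in `YIdx X`. -/
def idxB (V : Finset (El X)) (z : El X) (i : Io X z) : YIdx X :=
  ⟨(epsb V i.1 z, i.1, z), fun _ => i.2⟩

/-- Index of the column variable in `YIdx X`. -/
def idxC (V : Finset (El X)) (z : El X) (i : Io X z) : YIdx X :=
  ⟨(!(decide (i.1 ∈ V)), i.1, z), fun _ => i.2⟩

lemma BAq_eq_X (V : Finset (El X)) (z : El X) (i : Io X z) :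
    BAq V z i = MvPolynomial.X (idxB V z i) := yv_eq_X _ _ _ _

lemma CAq_eq_X (V : Finset (El X)) (z : El X) (i : Io X z) :
    CAq V z i = MvPolynomial.X (idxC V z i) := yv_eq_X _ _ _ _

lemma epsb_eq (V : Finset (El X)) {z : El X} (hz : z ∉ V) (i : El X) :
    epsb V i z = decide (i ∈ V) := by
  simp [epsb, hz]

lemma phi_BAq (V : Finset (El X)) {z : El X} (hz : z ∉ V) (i : Io X z) :
    phiA X (BAq V z i) = bbT V z i := by
  rw [BAq, yv_eq_X _ _ _ (fun _ => i.2), phiA, aeval_X]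
  have hf : fassign X ⟨(epsb V i.1 z, i.1, z), fun _ => i.2⟩
      = (1/2 : ℚ) • (MvPolynomial.X i.1
        + (if epsb V i.1 z then (1 : ℚ) else -1) • MvPolynomial.X z) := rfl
  rw [hf, epsb_eq V hz, bbT, sgq]
  by_cases h : i.1 ∈ V <;> simp [h]

lemma phi_CAq (V : Finset (El X)) {z : El X} (hz : z ∉ V) (i : Io X z) :
    phiA X (CAq V z i) = ccT V z i := by
  rw [CAq, yv_eq_X _ _ _ (fun _ => i.2), phiA, aeval_X]
  have hf : fassign X ⟨(!(decide (i.1 ∈ V)), i.1, z), fun _ => i.2⟩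
      = (1/2 : ℚ) • (MvPolynomial.X i.1
        + (if (!(decide (i.1 ∈ V))) then (1 : ℚ) else -1) • MvPolynomial.X z) := rfl
  rw [hf, ccT, sgq]
  by_cases h : i.1 ∈ V <;> simp [h, sub_eq_add_neg, neg_smul]

/-- The set of products of monomials in `bb` and `cc` of total degree `n`. -/
def PTset (V : Finset (El X)) (z : El X) (n : ℕ) : Set (MvPolynomial (El X) ℚ) :=
  {x | ∃ α β : Io X z → ℕ, ((∑ i, α i) + (∑ i, β i) = n) ∧
    x = (∏ i, bbT V z i ^ α i) * ∏ i, ccT V z i ^ β i}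

lemma PTset_mul {V : Finset (El X)} {z : El X} {n1 n2 : ℕ}
    {x y : MvPolynomial (El X) ℚ} (hx : x ∈ PTset V z n1) (hy : y ∈ PTset V z n2) :
    x * y ∈ PTset V z (n1 + n2) := by
  obtain ⟨α, β, hs, rfl⟩ := hx
  obtain ⟨α', β', hs', rfl⟩ := hy
  refine ⟨α + α', β + β', ?_, ?_⟩
  · simp only [Pi.add_apply, Finset.sum_add_distrib]
    omega
  · simp only [Pi.add_apply, pow_add, Finset.prod_mul_distrib]
    ring

lemma span_PTset_mul {V : Finset (El X)} {z : El X} {n1 n2 : ℕ}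
    {x y : MvPolynomial (El X) ℚ} (hx : x ∈ Submodule.span ℚ (PTset V z n1))
    (hy : y ∈ Submodule.span ℚ (PTset V z n2)) :
    x * y ∈ Submodule.span ℚ (PTset V z (n1 + n2)) := by
  have h := Submodule.mul_mem_mul hx hy
  rw [Submodule.span_mul_span] at h
  refine Submodule.span_le.mpr ?_ h
  rintro t ⟨a, ha, b, hb, rfl⟩
  exact Submodule.subset_span (PTset_mul ha hb)

lemma one_mem_PTset (V : Finset (El X)) (z : El X) : (1 : MvPolynomial (El X) ℚ) ∈ PTset V z 0 :=
  ⟨0, 0, by simp, by simp⟩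

lemma bbT_mem_PTset (V : Finset (El X)) (z : El X) (w : Io X z) : bbT V z w ∈ PTset V z 1 := by
  refine ⟨fun k => if k = w then 1 else 0, 0, by simp, ?_⟩
  rw [prod_pow_single (bbT V z) w]
  simp

lemma ccT_mem_PTset (V : Finset (El X)) (z : El X) (w : Io X z) : ccT V z w ∈ PTset V z 1 := by
  refine ⟨0, fun k => if k = w then 1 else 0, by simp, ?_⟩
  rw [prod_pow_single (ccT V z) w]
  simp

lemma X_mem_span_PTset (V : Finset (El X)) (z : El X) (hX : 2 ≤ X.card) (a : El X) :
    MvPolynomial.X a ∈ Submodule.span ℚ (PTset V z 1) := by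
  by_cases h : a = z
  · rw [h]
    obtain ⟨w', hw'⟩ : ∃ i : El X, i ≠ z :=
      Fintype.exists_ne_of_one_lt_card (by rw [Fintype.card_coe]; omega) z
    set w : Io X z := ⟨w', hw'⟩
    have hxz : (MvPolynomial.X z : MvPolynomial (El X) ℚ)
        = sgq V z w • bbT V z w - sgq V z w • ccT V z w := by
      rw [bbT, ccT]
      match_scalars
      · linear_combination (-1 : ℚ) * sgq_sq V z w
      · ring
    rw [hxz]
    exact Submodule.sub_mem _
      (Submodule.smul_mem _ _ (Submodule.subset_span (bbT_mem_PTset V z w)))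
      (Submodule.smul_mem _ _ (Submodule.subset_span (ccT_mem_PTset V z w)))
  · have hxa : (MvPolynomial.X a : MvPolynomial (El X) ℚ)
        = bbT V z ⟨a, h⟩ + ccT V z ⟨a, h⟩ := by
      rw [bbT, ccT]
      match_scalars <;> ring
    rw [hxa]
    exact Submodule.add_mem _
      (Submodule.subset_span (bbT_mem_PTset V z ⟨a, h⟩))
      (Submodule.subset_span (ccT_mem_PTset V z ⟨a, h⟩))

lemma pow_mem_span_PTset {V : Finset (El X)} {z : El X} {x : MvPolynomial (El X) ℚ}
    (hx : x ∈ Submodule.span ℚ (PTset V z 1)) (k : ℕ) :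
    x ^ k ∈ Submodule.span ℚ (PTset V z k) := by
  induction k with
  | zero => simpa using Submodule.subset_span (one_mem_PTset V z)
  | succ k ih =>
    rw [pow_succ]
    exact span_PTset_mul ih hx

lemma fassign_mem_span_PTset (V : Finset (El X)) (z : El X) (hX : 2 ≤ X.card) (v : YIdx X) :
    fassign X v ∈ Submodule.span ℚ (PTset V z 1) := by
  rw [fassign]
  exact Submodule.smul_mem _ _ (Submodule.add_mem _ (X_mem_span_PTset V z hX _)
    (Submodule.smul_mem _ _ (X_mem_span_PTset V z hX _)))

lemma prod_fassign_mem_span_PTset (V : Finset (El X)) (z : El X) (hX : 2 ≤ X.card)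
    (s : Finset (YIdx X)) (d : YIdx X → ℕ) :
    (∏ v ∈ s, fassign X v ^ d v) ∈ Submodule.span ℚ (PTset V z (∑ v ∈ s, d v)) := by
  induction s using Finset.cons_induction with
  | empty => simpa using Submodule.subset_span (one_mem_PTset V z)
  | cons a s ha ih =>
    rw [Finset.prod_cons, Finset.sum_cons]
    exact span_PTset_mul (pow_mem_span_PTset (fassign_mem_span_PTset V z hX a) (d a)) ih

lemma phi_mem_span_PTset (V : Finset (El X)) (z : El X) (hX : 2 ≤ X.card)
    {p : MvPolynomial (YIdx X) ℚ} {dp : ℕ} (hhom : p.IsHomogeneous dp) :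
    phiA X p ∈ Submodule.span ℚ (PTset V z dp) := by
  rw [← support_sum_monomial_coeff p, map_sum]
  refine Submodule.sum_mem _ fun d hd => ?_
  have hdeg : ∑ v ∈ d.support, d v = dp := by
    have h := hhom (mem_support_iff.mp hd)
    simpa [Finsupp.weight_apply, Finsupp.sum] using h
  have hmono : phiA X (monomial d (coeff d p))
      = coeff d p • ∏ v ∈ d.support, fassign X v ^ d v := by
    rw [monomial_eq, map_mul, map_finsuppProd]
    simp only [map_pow, phiA, aeval_X, aeval_C, MvPolynomial.algebraMap_eq]
    rw [MvPolynomial.smul_eq_C_mul]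
    rfl
  rw [hmono, ← hdeg]
  exact Submodule.smul_mem _ _ (prod_fassign_mem_span_PTset V z hX d.support d)

lemma prod_X_pow_eq_mono {σ ι : Type*} [DecidableEq σ] (s : Finset ι) (e : ι → σ) (a : ι → ℕ) :
    ∏ i ∈ s, (MvPolynomial.X (e i) : MvPolynomial σ ℚ) ^ a i
      = monomial (∑ i ∈ s, Finsupp.single (e i) (a i)) 1 := by
  induction s using Finset.cons_induction with
  | empty => simp
  | cons x s hx ih =>
    rw [Finset.prod_cons, Finset.sum_cons, ih, X_pow_eq_monomial, monomial_mul, one_mul]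

lemma sum_single_sum {σ ι : Type*} [DecidableEq σ] (s : Finset ι) (e : ι → σ) (a : ι → ℕ) :
    (∑ i ∈ s, Finsupp.single (e i) (a i)).sum (fun _ n => n) = ∑ i ∈ s, a i := by
  induction s using Finset.cons_induction with
  | empty => simp
  | cons x s hx ih =>
    rw [Finset.sum_cons, Finset.sum_cons,
      Finsupp.sum_add_index' (fun _ => rfl) (fun _ _ _ => rfl),
      Finsupp.sum_single_index rfl, ih]

end Span

theorem stmt15 (g : ℕ) (hg : 2 ≤ g) (X : Finset ℕ) (hX : 2 ≤ X.card)
    (V : Finset (El X)) (hV : V.Nonempty ∧ V ≠ Finset.univ)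
    (z : El X) (hz : z ∉ V)
    (p : MvPolynomial (YIdx X) ℚ) (dp : ℕ) (hhom : p.IsHomogeneous dp)
    (hdp : (2*(g:ℚ)*X.card*(X.card-1) - X.card + 1 - (X.card-1)*(X.card-2)*g) ≤ dp) :
    ∃ (N : ℕ) (q r : Fin N → MvPolynomial (YIdx X) ℚ),
      (∀ t, IsMonomial (q t) ∧ q t ∈ MvPolynomial.supported ℚ (YmB V) ∧
        IsMonomial (r t) ∧ r t ∈ MvPolynomial.supported ℚ (zCol V z) ∧
        (((X.card : ℚ)*(X.card-1)*g - X.card + 2) ≤ (q t).totalDegree ∨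
          (∏ i ∈ ({z} : Finset (El X))ᶜ, (yv (!(decide (i ∈ V))) i z)^(2*g)) ∣ r t)) ∧
      rmk X p = rmk X (∑ t, q t * r t) := by
  classical
  have hm1 : (1:ℕ) ≤ X.card := by omega
  have hcast1 : ((X.card - 1 : ℕ) : ℚ) = (X.card : ℚ) - 1 := by
    rw [Nat.cast_sub hm1]; norm_num
  have hdpN : X.card*(X.card-1)*g + 2*g*(X.card-1) + 1 ≤ dp + X.card := by
    rw [← Nat.cast_le (α := ℚ)]
    push_cast [hcast1]
    have hid : (2*(g:ℚ)*X.card*(X.card-1) - X.card + 1 - ((X.card:ℚ)-1)*((X.card:ℚ)-2)*g)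
        = (X.card:ℚ)*((X.card:ℚ)-1)*g + 2*g*((X.card:ℚ)-1) + 1 - X.card := by ring
    linarith [hdp, hid]
  have hmle : X.card ≤ X.card*(X.card-1)*g := by
    have h1 : 1*2 ≤ (X.card-1)*g := Nat.mul_le_mul (by omega) hg
    have h2 : X.card*1 ≤ X.card*((X.card-1)*g) := Nat.mul_le_mul_left _ (by omega)
    have h3 : X.card*((X.card-1)*g) = X.card*(X.card-1)*g := (Nat.mul_assoc _ _ _).symm
    omega
  set DqN := X.card*(X.card-1)*g + 2 - X.card with hDqN
  have hcardIo : Fintype.card (Io X z) = X.card - 1 := by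
    simp [Fintype.card_subtype_compl, Fintype.card_subtype_eq, Fintype.card_coe]
  have hdp' : DqN + 2*g*(Fintype.card (Io X z)) ≤ dp + 1 := by
    rw [hcardIo]; omega
  have hspan : phiA X p ∈ Submodule.span ℚ
      {x : MvPolynomial (El X) ℚ | ∃ α' β' : Io X z → ℕ,
        (DqN ≤ ∑ i, α' i ∨ ∀ i, 2*g ≤ β' i) ∧
        x = (∏ i, bbT V z i ^ α' i) * ∏ i, ccT V z i ^ β' i} := by
    refine Submodule.span_le.mpr ?_ (phi_mem_span_PTset V z hX hhom)
    rintro x ⟨α, β, hsum, rfl⟩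
    exact core (bbT V z) (ccT V z) (-((1:ℚ) • MvPolynomial.X z)) (sgq V z) (sgq_sq V z)
      (ccT_rel V z) g DqN dp hdp' _ α β hsum le_rfl
  obtain ⟨N, f, gf, hrep⟩ := Submodule.mem_span_set'.mp hspan
  have hch : ∀ t : Fin N, ∃ α β : Io X z → ℕ,
      (DqN ≤ ∑ i, α i ∨ ∀ i, 2*g ≤ β i) ∧
      (gf t : MvPolynomial (El X) ℚ) = (∏ i, bbT V z i ^ α i) * ∏ i, ccT V z i ^ β i :=
    fun t => (gf t).2
  choose αf βf hcond heq using hch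
  refine ⟨N, fun t => ∏ i, BAq V z i ^ αf t i,
    fun t => f t • ∏ i, CAq V z i ^ βf t i, fun t => ?_, ?_⟩
  · have hqmono : (∏ i, BAq V z i ^ αf t i)
        = monomial (∑ i, Finsupp.single (idxB V z i) (αf t i)) 1 := by
      simp only [BAq_eq_X]
      exact prod_X_pow_eq_mono Finset.univ _ _
    have hrmono : (∏ i, CAq V z i ^ βf t i)
        = monomial (∑ i, Finsupp.single (idxC V z i) (βf t i)) 1 := by
      simp only [CAq_eq_X]
      exact prod_X_pow_eq_mono Finset.univ _ _
    refine ⟨⟨_, 1, hqmono⟩, ?_, ⟨_, f t • (1:ℚ), by show f t • (∏ i, CAq V z i ^ βf t i) = _; rw [hrmono, smul_monomial]⟩, ?_, ?_⟩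
    · refine Subalgebra.prod_mem _ fun i _ => Subalgebra.pow_mem _ ?_ _
      rw [BAq_eq_X]
      exact (MvPolynomial.X_mem_supported).mpr ⟨i.2, rfl⟩
    · refine Subalgebra.smul_mem _ (Subalgebra.prod_mem _ fun i _ => Subalgebra.pow_mem _ ?_ _) _
      rw [CAq_eq_X]
      exact (MvPolynomial.X_mem_supported).mpr ⟨rfl, i.2, rfl⟩
    · rcases hcond t with h | h
      · left
        have hdeg : (∏ i, BAq V z i ^ αf t i).totalDegree = ∑ i, αf t i := by
          rw [hqmono, totalDegree_monomial _ (one_ne_zero), sum_single_sum]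
        rw [hdeg]
        have hN : X.card*(X.card-1)*g + 2 ≤ (∑ i, αf t i) + X.card := by omega
        rw [← Nat.cast_le (α := ℚ)] at hN
        push_cast [hcast1] at hN ⊢
        linarith
      · right
        have hgoal : (∏ i ∈ ({z} : Finset (El X))ᶜ, (yv (!(decide (i ∈ V))) i z)^(2*g))
            = ∏ i : Io X z, CAq V z i ^ (2*g) :=
          Finset.prod_subtype _ (fun x => by simp) _
        have hfac : (∏ i : Io X z, CAq V z i ^ βf t i)
            = (∏ i : Io X z, CAq V z i ^ (2*g)) * ∏ i : Io X z, CAq V z i ^ (βf t i - 2*g) := by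
          rw [← Finset.prod_mul_distrib]
          refine Finset.prod_congr rfl fun i _ => ?_
          rw [← pow_add]
          congr 1
          have := h i
          omega
        show _ ∣ f t • ∏ i, CAq V z i ^ βf t i
        rw [hgoal, MvPolynomial.smul_eq_C_mul]
        exact ⟨MvPolynomial.C (f t) * ∏ i : Io X z, CAq V z i ^ (βf t i - 2*g),
          by rw [hfac]; ring⟩
  · have hφq : ∀ t, phiA X ((∏ i, BAq V z i ^ αf t i) * (f t • ∏ i, CAq V z i ^ βf t i))
        = f t • (gf t : MvPolynomial (El X) ℚ) := by
      intro t
      rw [map_mul, map_smul, map_prod, map_prod]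
      simp only [map_pow, phi_BAq V hz, phi_CAq V hz]
      rw [mul_smul_comm, ← heq t]
    have hφsum : phiA X (∑ t, (∏ i, BAq V z i ^ αf t i) * (f t • ∏ i, CAq V z i ^ βf t i))
        = phiA X p := by
      rw [map_sum, ← hrep]
      exact Finset.sum_congr rfl fun t _ => hφq t
    have hmem : p - (∑ t, (∏ i, BAq V z i ^ αf t i) * (f t • ∏ i, CAq V z i ^ βf t i))
        ∈ relIdeal X := by
      have h1 := kappa_sub_mem (X := X) p
      have h2 := kappa_sub_mem (X := X)
        (∑ t, (∏ i, BAq V z i ^ αf t i) * (f t • ∏ i, CAq V z i ^ βf t i))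
      rw [hφsum] at h2
      have h3 : p - (∑ t, (∏ i, BAq V z i ^ αf t i) * (f t • ∏ i, CAq V z i ^ βf t i))
          = (psiA X (phiA X p)
              - (∑ t, (∏ i, BAq V z i ^ αf t i) * (f t • ∏ i, CAq V z i ^ βf t i)))
            - (psiA X (phiA X p) - p) := by ring
      rw [h3]
      exact Ideal.sub_mem _ h2 h1
    show Ideal.Quotient.mk (relIdeal X) p = Ideal.Quotient.mk (relIdeal X) _
    exact (Ideal.Quotient.eq).mpr hmem
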